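/- Let F be a d-regular locally sparse graph on [n] and let F̃ be a connected subgraph of F with x vertices, ℓ edges, and excess σ = (d/2)x − ℓ − Δ/2 ≥ 0. Then the vertex boundary of F̃ (vertices of degree less than d in F̃) has size at most Δ + 2σ. -/

import Mathlib

open SimpleGraph

/-- The edge boundary of a subgraph `H` of `G`: edges of `G` with one endpoint in `H.verts`
and the other outside. -/
def edgeBoundary {V : Type*} (G : SimpleGraph V) (H : G.Subgraph) : Set (Sym2 V) :=
  {e | ∃ u v, e = s(u, v) ∧ G.Adj u v ∧ u ∈ H.verts ∧ v ∉ H.verts}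

/-- `G` is `d`-regular. -/
def IsRegularGraph {V : Type*} (G : SimpleGraph V) (d : ℕ) : Prop :=
  ∀ v, (G.neighborSet v).ncard = d

/-- `G` on `n` vertices is locally sparse: every subgraph on between 3 and `n - 3`
vertices has edge boundary of size at least `d + 1`. -/
def LocallySparse {n : ℕ} (G : SimpleGraph (Fin n)) (d : ℕ) : Prop :=
  ∀ H : G.Subgraph, 3 ≤ H.verts.ncard → H.verts.ncard ≤ n - 3 →
    d + 1 ≤ (edgeBoundary G H).ncard

/-- `Δ = d + 1` for odd `d`, `Δ = d + 2` for even `d`. -/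
def Delta (d : ℕ) : ℕ := if Odd d then d + 1 else d + 2

/-- A closed subgraph: an induced subgraph whose edge boundary has size exactly `Δ`. -/
def IsClosedSubgraph {V : Type*} (G : SimpleGraph V) (d : ℕ) (H : G.Subgraph) : Prop :=
  H.IsInduced ∧ (edgeBoundary G H).ncard = Delta d

/-- For a connected subgraph `H` of a locally sparse `d`-regular graph with `x` vertices,
`ℓ` edges and excess `σ` (i.e. `dx = 2ℓ + Δ + 2σ`), the vertex boundary of `H` (vertices
of degree less than `d` in `H`) has size at most `Δ + 2σ`. -/
theorem vertex_boundary_le_excess {n d : ℕ} (hd : 3 ≤ d) (G : SimpleGraph (Fin n))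
    (hreg : IsRegularGraph G d) (hls : LocallySparse G d)
    (H : G.Subgraph) (hconn : H.Connected) (x ℓ σ : ℕ)
    (hx : H.verts.ncard = x) (hl : H.edgeSet.ncard = ℓ)
    (hσ : d * x = 2 * ℓ + Delta d + 2 * σ) :
    {v ∈ H.verts | (H.neighborSet v).ncard < d}.ncard ≤ Delta d + 2 * σ := by
  classical
  set deg : Fin n → ℕ := fun v => (H.neighborSet v).ncard with hdeg
  have hdegle : ∀ v, deg v ≤ d := fun v => by
    rw [hdeg, ← hreg v]; exact Set.ncard_le_ncard (H.neighborSet_subset v) (Set.toFinite _)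
  have h2 : ∀ v : H.verts, H.coe.degree v = deg v := by
    intro v
    rw [H.coe_degree, ← Subgraph.finset_card_neighborSet_eq_degree, hdeg]
    simp [Set.ncard_eq_toFinset_card', -Set.fintypeCard_eq_ncard]
  have hsum : ∑ v : H.verts, deg v = 2 * ℓ := by
    have h1 := H.coe.sum_degrees_eq_twice_card_edges
    have h3 : H.coe.edgeFinset.card = ℓ := by
      rw [← hl, ← H.image_coe_edgeSet_coe, Set.ncard_image_of_injective _
        (Sym2.map.injective Subtype.val_injective), Set.ncard_eq_toFinset_card',
        Set.toFinset_card, ← edgeFinset_card]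
    rw [← h3, ← h1]
    apply Finset.sum_congr rfl
    intro v _
    rw [← h2 v]
    congr!
  -- now the counting
  set B : Set (Fin n) := {v ∈ H.verts | deg v < d} with hB
  have hBsub : B.toFinset ⊆ Set.toFinset H.verts := by
    intro v hv; simp only [Set.mem_toFinset] at *; exact hv.1
  have hcard : B.toFinset.card ≤ ∑ v ∈ H.verts.toFinset, (d - deg v) := by
    calc B.toFinset.card = ∑ v ∈ B.toFinset, 1 := by simp
    _ ≤ ∑ v ∈ B.toFinset, (d - deg v) := by
        apply Finset.sum_le_sum; intro v hv
        simp only [Set.mem_toFinset, hB, Set.mem_setOf_eq] at hv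
        omega
    _ ≤ ∑ v ∈ H.verts.toFinset, (d - deg v) :=
        Finset.sum_le_sum_of_subset hBsub
  have hsum2 : ∑ v ∈ H.verts.toFinset, (d - deg v) + 2 * ℓ = d * x := by
    have : ∑ v ∈ H.verts.toFinset, deg v = 2 * ℓ := by
      rw [← hsum, ← Finset.sum_set_coe]
    rw [← this, ← Finset.sum_add_distrib]
    have : ∀ v ∈ H.verts.toFinset, d - deg v + deg v = d := fun v _ => by
      have := hdegle v; omega
    rw [Finset.sum_congr rfl this, Finset.sum_const, ← hx, Set.ncard_eq_toFinset_card',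
      smul_eq_mul, mul_comm]
  have : B.ncard = B.toFinset.card := Set.ncard_eq_toFinset_card' B
  omega
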